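/- Shift bound for the trace of the positive part: let n be a nonempty finite type, A : Matrix n n ℂ Hermitian, and c ≤ 0 a real number. Then Re(Tr((c • (1 : Matrix n n ℂ) + A)₊)) ≤ max(0, c + Re(Tr(A₊))). -/

import Mathlib

open Matrix

lemma sum_max_shift {n : Type*} [Fintype n] [DecidableEq n] (lam : n → ℝ) (c : ℝ) (hc : c ≤ 0) :
    ∑ i, max (c + lam i) 0 ≤ max 0 (c + ∑ i, max (lam i) 0) := by
  by_cases h : ∃ i, 0 < c + lam i
  · obtain ⟨i₀, hi₀⟩ := h
    refine le_trans ?_ (le_max_right _ _)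
    have key : ∀ i, max (c + lam i) 0 ≤ (if i = i₀ then c else 0) + max (lam i) 0 := by
      intro i
      by_cases hi : i = i₀
      · subst hi
        rw [if_pos rfl]
        exact max_le (by linarith [le_max_left (lam i) 0]) (by linarith [le_max_left (lam i) 0])
      · simp only [if_neg hi, zero_add]
        exact max_le (by linarith [le_max_left (lam i) 0]) (le_max_right _ _)
    calc ∑ i, max (c + lam i) 0 ≤ ∑ i, ((if i = i₀ then c else 0) + max (lam i) 0) :=
          Finset.sum_le_sum fun i _ => key i
      _ = c + ∑ i, max (lam i) 0 := by
          rw [Finset.sum_add_distrib, Finset.sum_ite_eq' Finset.univ i₀ (fun _ => c)]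
          simp
  · push_neg at h
    refine le_trans (le_of_eq ?_) (le_max_left _ _)
    exact Finset.sum_eq_zero fun i _ => max_eq_right (h i)

lemma trace_cfc_re {n : Type*} [Fintype n] [DecidableEq n] (A : Matrix n n ℂ)
    (hA : A.IsHermitian) (f : ℝ → ℝ) :
    (cfc f A).trace.re = ∑ i, f (hA.eigenvalues i) := by
  rw [hA.cfc_eq, Matrix.IsHermitian.cfc, Unitary.conjStarAlgAut_apply, Matrix.trace_mul_cycle,
    Matrix.UnitaryGroup.star_mul_self, Matrix.one_mul, Matrix.trace_diagonal]
  simp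

/-- The positive part of a matrix, given by the continuous functional calculus
applied to `fun x => max x 0` (for a Hermitian matrix this replaces each
eigenvalue `x` in the spectral decomposition by `max x 0`). -/
noncomputable def matPosPart {n : Type*} [Fintype n] [DecidableEq n]
    (A : Matrix n n ℂ) : Matrix n n ℂ :=
  cfc (fun x : ℝ => max x 0) A

/-- Shift bound for the trace of the positive part: for Hermitian `A` and a
real `c ≤ 0`, `Re (Tr ((c • 1 + A)₊)) ≤ max 0 (c + Re (Tr A₊))`. -/
theorem trace_posPart_smul_one_add_le
    {n : Type*} [Fintype n] [DecidableEq n] [Nonempty n]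
    (A : Matrix n n ℂ) (hA : A.IsHermitian) (c : ℝ) (hc : c ≤ 0) :
    (matPosPart (c • (1 : Matrix n n ℂ) + A)).trace.re
      ≤ max 0 (c + (matPosPart A).trace.re) := by
  have hA' : IsSelfAdjoint A := hA
  have hshift : c • (1 : Matrix n n ℂ) + A = cfc (fun x : ℝ => c + x) A := by
    rw [cfc_add .., cfc_const c A, cfc_id' ℝ A, Algebra.algebraMap_eq_smul_one]
  rw [matPosPart, matPosPart, hshift,
    ← cfc_comp (fun x : ℝ => max x 0) (fun x : ℝ => c + x) A]
  rw [trace_cfc_re A hA, trace_cfc_re A hA]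
  exact sum_max_shift _ c hc
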